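/- Let r be a nonnegative integer, and let G be a τ-critical graph with τ(G) = t ≥ r and |V(G)| = n. Let λ₁ denote the largest eigenvalue of the adjacency matrix of G. Then n·(r + λ₁/2) ≤ (t+r+1 choose 2). -/

import Mathlib

open SimpleGraph

variable {V : Type*}

/-- A transversal set (vertex cover): a set of vertices incident to all edges. -/
def IsTransversal (G : SimpleGraph V) (T : Finset V) : Prop :=
  ∀ ⦃u v : V⦄, G.Adj u v → u ∈ T ∨ v ∈ T

/-- The transversal number `τ(G)`: minimum cardinality of a transversal set. -/
noncomputable def tauNum (G : SimpleGraph V) [Fintype V] : ℕ :=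
  sInf {k | ∃ T : Finset V, T.card = k ∧ IsTransversal G T}

/-- `G` is τ-critical: it has no isolated vertex and deleting any edge decreases `τ`. -/
def IsTauCritical (G : SimpleGraph V) [Fintype V] : Prop :=
  (∀ v : V, ∃ u, G.Adj v u) ∧
    ∀ e ∈ G.edgeSet, tauNum (G.deleteEdges {e}) < tauNum G

/-- `mK2 m` is the disjoint union of `m` copies of `K₂`. -/
def mK2 (m : ℕ) : SimpleGraph (Fin m × Fin 2) where
  Adj x y := x.1 = y.1 ∧ x.2 ≠ y.2
  symm := ⟨fun _ _ ⟨h1, h2⟩ => ⟨h1.symm, h2.symm⟩⟩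
  loopless := ⟨fun _ ⟨_, h⟩ => h rfl⟩

/-- The spectral radius `λ₁(G)`: the largest eigenvalue of the adjacency matrix of `G`. -/
noncomputable def specRad (G : SimpleGraph V) [Fintype V] [DecidableEq V]
    [DecidableRel G.Adj] : ℝ :=
  sSup (spectrum ℝ (G.adjMatrix ℝ))

/-- The signless Laplacian spectral radius `q₁(G)`: the largest eigenvalue of
`Q(G) = D(G) + A(G)`. -/
noncomputable def signlessLapSpecRad (G : SimpleGraph V) [Fintype V] [DecidableEq V]
    [DecidableRel G.Adj] : ℝ :=
  sSup (spectrum ℝ (Matrix.diagonal (fun v => (G.degree v : ℝ)) + G.adjMatrix ℝ))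

set_option linter.unusedSectionVars false

section Lemmas
variable [Fintype V] [DecidableEq V]

lemma exists_min_transversal (G : SimpleGraph V) :
    ∃ T : Finset V, T.card = tauNum G ∧ IsTransversal G T := by
  have hne : {k | ∃ T : Finset V, T.card = k ∧ IsTransversal G T}.Nonempty :=
    ⟨(Finset.univ : Finset V).card, Finset.univ, rfl, fun u v _ => Or.inl (Finset.mem_univ u)⟩
  exact Nat.sInf_mem hne

lemma tauNum_le (G : SimpleGraph V) {T : Finset V} (h : IsTransversal G T) :
    tauNum G ≤ T.card := Nat.sInf_le ⟨T, rfl, h⟩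

lemma indep_card_add_tau_le (G : SimpleGraph V) {I : Finset V}
    (h : ∀ x ∈ I, ∀ y ∈ I, ¬ G.Adj x y) : I.card + tauNum G ≤ Fintype.card V := by
  have htr : IsTransversal G Iᶜ := by
    intro u v huv
    by_cases hu : u ∈ I
    · by_cases hv : v ∈ I
      · exact absurd huv (h u hu v hv)
      · exact Or.inr (Finset.mem_compl.mpr hv)
    · exact Or.inl (Finset.mem_compl.mpr hu)
  have h2 := tauNum_le G htr
  have h3 : Iᶜ.card = Fintype.card V - I.card := Finset.card_compl I
  have h4 : I.card ≤ Fintype.card V := by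
    simpa using Finset.card_le_univ I
  omega

lemma exists_witness (G : SimpleGraph V) (hcrit : IsTauCritical G) {a b : V}
    (hab : G.Adj a b) :
    ∃ D : Finset V, a ∈ D ∧ b ∈ D ∧ D.card + tauNum G = Fintype.card V + 1 ∧
      ∀ x ∈ D, ∀ y ∈ D, G.Adj x y → (x = a ∧ y = b) ∨ (x = b ∧ y = a) := by
  have he : s(a, b) ∈ G.edgeSet := G.mem_edgeSet.mpr hab
  have hlt := hcrit.2 _ he
  obtain ⟨T, hTcard, hTtr⟩ := exists_min_transversal (G.deleteEdges {s(a, b)})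
  have key : ∀ u v : V, G.Adj u v → s(u, v) ≠ s(a, b) → u ∈ T ∨ v ∈ T := by
    intro u v huv hne
    exact hTtr (by rw [SimpleGraph.deleteEdges_adj]; exact ⟨huv, by simpa using hne⟩)
  have habT : a ∉ T ∧ b ∉ T := by
    constructor <;> intro hc <;>
    · have htr : IsTransversal G T := by
        intro u v huv
        by_cases h : s(u, v) = s(a, b)
        · rcases Sym2.eq_iff.mp h with ⟨h1, h2⟩ | ⟨h1, h2⟩ <;>
            first
              | exact Or.inl (by rw [h1]; exact hc)
              | exact Or.inr (by rw [h2]; exact hc)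
              | exact Or.inl (by rw [h1]; exact hc)
        · exact key u v huv h
      have := tauNum_le G htr
      omega
  have htr2 : IsTransversal G (insert a T) := by
    intro u v huv
    by_cases h : s(u, v) = s(a, b)
    · rcases Sym2.eq_iff.mp h with ⟨h1, h2⟩ | ⟨h1, h2⟩
      · exact Or.inl (by rw [h1]; exact Finset.mem_insert_self a T)
      · exact Or.inr (by rw [h2]; exact Finset.mem_insert_self a T)
    · rcases key u v huv h with h' | h'
      · exact Or.inl (Finset.mem_insert_of_mem h')
      · exact Or.inr (Finset.mem_insert_of_mem h')
  have h5 := tauNum_le G htr2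
  have h6 : (insert a T).card ≤ T.card + 1 := Finset.card_insert_le a T
  have hcc : Tᶜ.card = Fintype.card V - T.card := Finset.card_compl T
  have h4 : T.card ≤ Fintype.card V := by simpa using Finset.card_le_univ T
  refine ⟨Tᶜ, Finset.mem_compl.mpr habT.1, Finset.mem_compl.mpr habT.2, by omega, ?_⟩
  intro x hx y hy hxy
  by_contra hc
  have hne : s(x, y) ≠ s(a, b) := fun h => hc (Sym2.eq_iff.mp h)
  rcases key x y hxy hne with h' | h'
  · exact (Finset.mem_compl.mp hx) h'
  · exact (Finset.mem_compl.mp hy) h'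

end Lemmas

section Hall
variable [Fintype V] [DecidableEq V]

/-- The set of neighbours of `J` that are not neighbours of `v`. -/
noncomputable def zs (G : SimpleGraph V) (v : V) (J : Finset V) : Finset V :=
  @Finset.filter _ (fun z => (∃ x ∈ J, G.Adj x z) ∧ ¬ G.Adj v z)
    (Classical.decPred _) Finset.univ

lemma mem_zs {G : SimpleGraph V} {v z : V} {J : Finset V} :
    z ∈ zs G v J ↔ (∃ x ∈ J, G.Adj x z) ∧ ¬ G.Adj v z := by
  simp [zs]

lemma zs_mono {G : SimpleGraph V} (v : V) {J J' : Finset V} (h : J' ⊆ J) :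
    zs G v J' ⊆ zs G v J := by
  intro z hz
  rw [mem_zs] at hz ⊢
  obtain ⟨⟨x, hx, hadj⟩, hnv⟩ := hz
  exact ⟨⟨x, h hx, hadj⟩, hnv⟩

lemma hall_lemma (G : SimpleGraph V) (hcrit : IsTauCritical G) (v : V) :
    ∀ (k : ℕ) (J : Finset V), J.card ≤ k →
      (∀ x ∈ J, ∀ y ∈ J, ¬ G.Adj x y) →
      (∀ x ∈ J, ¬ G.Adj v x ∧ x ≠ v) →
      J.card ≤ (zs G v J).card := by
  intro k
  induction k with
  | zero =>
    intro J hJ _ _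
    omega
  | succ k ih =>
    intro J hJk hind havoid
    by_contra hlt
    push_neg at hlt
    set Z := zs G v J with hZdef
    -- J is nonempty
    obtain ⟨a₀, ha₀⟩ : ∃ a, a ∈ J := Finset.card_pos.mp (by omega)
    -- no member of J lies in Z
    have hJZ : ∀ x ∈ J, x ∉ Z := by
      intro x hx hxZ
      obtain ⟨⟨y, hy, hadj⟩, _⟩ := mem_zs.mp hxZ
      exact hind y hy x hx hadj
    -- key property: every z ∈ Z has a neighbour in J different from any given a
    have P2 : ∀ z ∈ Z, ∀ a ∈ J, ∃ x ∈ J, x ≠ a ∧ G.Adj x z := by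
      intro z hz a ha
      have hcard : (J.erase a).card = J.card - 1 := Finset.card_erase_of_mem ha
      have hIH := ih (J.erase a) (by omega)
        (fun x hx y hy => hind x (Finset.mem_of_mem_erase hx) y (Finset.mem_of_mem_erase hy))
        (fun x hx => havoid x (Finset.mem_of_mem_erase hx))
      have hsub : zs G v (J.erase a) ⊆ Z := zs_mono v (Finset.erase_subset a J)
      have heq : zs G v (J.erase a) = Z :=
        Finset.eq_of_subset_of_card_le hsub (by omega)
      rw [← heq] at hz
      obtain ⟨⟨x, hx, hadj⟩, _⟩ := mem_zs.mp hz
      exact ⟨x, Finset.mem_of_mem_erase hx, (Finset.mem_erase.mp hx).1, hadj⟩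
    by_cases hA : ∃ a ∈ J, ∃ b, G.Adj a b ∧ G.Adj v b
    · -- Case A
      obtain ⟨a, ha, b, hab, hvb⟩ := hA
      obtain ⟨D, hvD, hbD, hDcard, hDonly⟩ := exists_witness G hcrit hvb
      have hbne : b ≠ v := fun h => G.loopless.irrefl v (h ▸ hvb)
      have haD : a ∉ D := by
        intro haD
        rcases hDonly a haD b hbD hab with ⟨h1, _⟩ | ⟨_, h2⟩
        · exact (havoid a ha).2 h1
        · exact G.loopless.irrefl v (h2 ▸ hvb)
      have hbJ : b ∉ J := fun h => (havoid b h).1 hvb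
      have hbZ : b ∉ Z := fun h => (mem_zs.mp h).2 hvb
      set J' := J ∩ D with hJ'def
      have hJ'J : J' ⊂ J := by
        refine Finset.ssubset_iff_of_subset Finset.inter_subset_left |>.mpr ⟨a, ha, ?_⟩
        intro h
        exact haD (Finset.mem_inter.mp h).2
      have hq : J'.card < J.card := Finset.card_lt_card hJ'J
      have hIH' : J'.card ≤ (zs G v J').card :=
        ih J' (by omega)
          (fun x hx y hy => hind x (Finset.mem_inter.mp hx).1 y (Finset.mem_inter.mp hy).1)
          (fun x hx => havoid x (Finset.mem_inter.mp hx).1)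
      -- zs G v J' is disjoint from D and contained in Z
      have hzd : ∀ w ∈ zs G v J', w ∈ Z ∧ w ∉ D := by
        intro w hw
        obtain ⟨⟨x, hx, hadj⟩, hnv⟩ := mem_zs.mp hw
        have hxJ : x ∈ J := (Finset.mem_inter.mp hx).1
        have hxD : x ∈ D := (Finset.mem_inter.mp hx).2
        refine ⟨mem_zs.mpr ⟨⟨x, hxJ, hadj⟩, hnv⟩, ?_⟩
        intro hwD
        rcases hDonly x hxD w hwD hadj with ⟨h1, _⟩ | ⟨_, h2⟩
        · exact (havoid x hxJ).2 h1
        · exact (havoid x hxJ).1 (h2 ▸ hadj).symm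
      have hzsub : zs G v J' ⊆ Z \ D := by
        intro w hw
        exact Finset.mem_sdiff.mpr ⟨(hzd w hw).1, (hzd w hw).2⟩
      have hZsd : J'.card ≤ (Z \ D).card :=
        le_trans hIH' (Finset.card_le_card hzsub)
      -- the exchanged independent set E
      set X := insert b Z with hXdef
      set E := (D \ X) ∪ J with hEdef
      have hEind : ∀ x ∈ E, ∀ y ∈ E, ¬ G.Adj x y := by
        have hcross : ∀ x ∈ J, ∀ y ∈ D \ X, ¬ G.Adj x y := by
          intro x hx y hy hxy
          have hyD := (Finset.mem_sdiff.mp hy).1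
          have hyX := (Finset.mem_sdiff.mp hy).2
          by_cases hvy : G.Adj v y
          · rcases hDonly v hvD y hyD hvy with ⟨_, h2⟩ | ⟨_, h2⟩
            · exact hyX (by rw [h2]; exact Finset.mem_insert_self b Z)
            · exact (havoid x hx).1 (h2 ▸ hxy).symm
          · exact hyX (Finset.mem_insert_of_mem (mem_zs.mpr ⟨⟨x, hx, hxy⟩, hvy⟩))
        intro x hx y hy hxy
        rcases Finset.mem_union.mp hx with hx' | hx' <;>
          rcases Finset.mem_union.mp hy with hy' | hy'
        · have hxD := (Finset.mem_sdiff.mp hx').1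
          have hyD := (Finset.mem_sdiff.mp hy').1
          rcases hDonly x hxD y hyD hxy with ⟨_, h2⟩ | ⟨h1, _⟩
          · exact (Finset.mem_sdiff.mp hy').2 (by rw [h2]; exact Finset.mem_insert_self b Z)
          · exact (Finset.mem_sdiff.mp hx').2 (by rw [h1]; exact Finset.mem_insert_self b Z)
        · exact hcross y hy' x hx' hxy.symm
        · exact hcross x hx' y hy' hxy
        · exact hind x hx' y hy' hxy
      have hEcard := indep_card_add_tau_le G hEind
      -- cardinality bookkeeping
      have hint : (D \ X) ∩ J = J' := by
        ext w
        simp only [Finset.mem_inter, Finset.mem_sdiff, hJ'def, hXdef, Finset.mem_insert]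
        constructor
        · rintro ⟨⟨hwD, _⟩, hwJ⟩
          exact ⟨hwJ, hwD⟩
        · rintro ⟨hwJ, hwD⟩
          refine ⟨⟨hwD, ?_⟩, hwJ⟩
          rintro (rfl | hwZ)
          · exact hbJ hwJ
          · exact hJZ w hwJ hwZ
      have hEuc : E.card + J'.card = (D \ X).card + J.card := by
        rw [hEdef, ← hint]
        exact Finset.card_union_add_card_inter _ _
      have hDX : (D \ X).card + (D ∩ X).card = D.card :=
        Finset.card_sdiff_add_card_inter D X
      have hDiX : D ∩ X = insert b (D ∩ Z) := by
        ext w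
        simp only [Finset.mem_inter, hXdef, Finset.mem_insert]
        constructor
        · rintro ⟨hwD, rfl | hwZ⟩
          · exact Or.inl rfl
          · exact Or.inr ⟨hwD, hwZ⟩
        · rintro (rfl | ⟨hwD, hwZ⟩)
          · exact ⟨hbD, Or.inl rfl⟩
          · exact ⟨hwD, Or.inr hwZ⟩
      have hDiXcard : (D ∩ X).card = (D ∩ Z).card + 1 := by
        rw [hDiX]
        rw [Finset.card_insert_of_notMem (fun h => hbZ (Finset.mem_inter.mp h).2)]
      have hZsplit : (Z \ D).card + (Z ∩ D).card = Z.card :=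
        Finset.card_sdiff_add_card_inter Z D
      have hZDcomm : (Z ∩ D).card = (D ∩ Z).card := by rw [Finset.inter_comm]
      omega
    · -- Case B
      push_neg at hA
      obtain ⟨b, hab⟩ := hcrit.1 a₀
      have hvb : ¬ G.Adj v b := hA a₀ ha₀ b hab
      have hbZ : b ∈ Z := mem_zs.mpr ⟨⟨a₀, ha₀, hab⟩, hvb⟩
      obtain ⟨D, haD, hbD, hDcard, hDonly⟩ := exists_witness G hcrit hab
      have hbJ : b ∉ J := fun h => hind a₀ ha₀ b h hab
      by_cases hJD : J ⊆ D
      · -- direct contradiction via P2 at z = b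
        obtain ⟨x, hxJ, hxa, hxb⟩ := P2 b hbZ a₀ ha₀
        rcases hDonly x (hJD hxJ) b hbD hxb with ⟨h1, _⟩ | ⟨h1, _⟩
        · exact hxa h1
        · exact hbJ (h1 ▸ hxJ)
      · -- counting case
        set J' := J ∩ D with hJ'def
        have hJ'J : J' ⊂ J := by
          refine Finset.ssubset_iff_of_subset Finset.inter_subset_left |>.mpr ?_
          obtain ⟨x, hxJ, hxD⟩ := Finset.not_subset.mp hJD
          exact ⟨x, hxJ, fun h => hxD (Finset.mem_inter.mp h).2⟩
        have hq : J'.card < J.card := Finset.card_lt_card hJ'J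
        have ha₀J' : a₀ ∈ J' := Finset.mem_inter.mpr ⟨ha₀, haD⟩
        have hIH' : J'.card ≤ (zs G v J').card :=
          ih J' (by omega)
            (fun x hx y hy => hind x (Finset.mem_inter.mp hx).1 y (Finset.mem_inter.mp hy).1)
            (fun x hx => havoid x (Finset.mem_inter.mp hx).1)
        have hzsub : zs G v J' ⊆ insert b (Z \ D) := by
          intro w hw
          obtain ⟨⟨x, hx, hadj⟩, hnv⟩ := mem_zs.mp hw
          have hxJ : x ∈ J := (Finset.mem_inter.mp hx).1
          have hxD : x ∈ D := (Finset.mem_inter.mp hx).2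
          have hwZ : w ∈ Z := mem_zs.mpr ⟨⟨x, hxJ, hadj⟩, hnv⟩
          by_cases hwD : w ∈ D
          · rcases hDonly x hxD w hwD hadj with ⟨_, h2⟩ | ⟨h1, _⟩
            · exact (by rw [h2]; exact Finset.mem_insert_self b _)
            · exact absurd (h1 ▸ hxJ) hbJ
          · exact Finset.mem_insert_of_mem (Finset.mem_sdiff.mpr ⟨hwZ, hwD⟩)
        have hZsd : J'.card ≤ (Z \ D).card + 1 := by
          calc J'.card ≤ (zs G v J').card := hIH'
            _ ≤ (insert b (Z \ D)).card := Finset.card_le_card hzsub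
            _ ≤ (Z \ D).card + 1 := Finset.card_insert_le _ _
        -- exchanged independent set
        set E := (D \ Z) ∪ J with hEdef
        have hEind : ∀ x ∈ E, ∀ y ∈ E, ¬ G.Adj x y := by
          have hcross : ∀ x ∈ J, ∀ y ∈ D \ Z, ¬ G.Adj x y := by
            intro x hx y hy hxy
            have hvy : ¬ G.Adj v y := hA x hx y hxy
            exact (Finset.mem_sdiff.mp hy).2 (mem_zs.mpr ⟨⟨x, hx, hxy⟩, hvy⟩)
          intro x hx y hy hxy
          rcases Finset.mem_union.mp hx with hx' | hx' <;>
            rcases Finset.mem_union.mp hy with hy' | hy'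
          · have hxD := (Finset.mem_sdiff.mp hx').1
            have hyD := (Finset.mem_sdiff.mp hy').1
            rcases hDonly x hxD y hyD hxy with ⟨_, h2⟩ | ⟨h1, _⟩
            · exact (Finset.mem_sdiff.mp hy').2 (h2 ▸ hbZ)
            · exact (Finset.mem_sdiff.mp hx').2 (h1 ▸ hbZ)
          · exact hcross y hy' x hx' hxy.symm
          · exact hcross x hx' y hy' hxy
          · exact hind x hx' y hy' hxy
        have hEcard := indep_card_add_tau_le G hEind
        have hint : (D \ Z) ∩ J = J' := by
          ext w
          simp only [Finset.mem_inter, Finset.mem_sdiff, hJ'def]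
          constructor
          · rintro ⟨⟨hwD, _⟩, hwJ⟩
            exact ⟨hwJ, hwD⟩
          · rintro ⟨hwJ, hwD⟩
            exact ⟨⟨hwD, fun hwZ => hJZ w hwJ hwZ⟩, hwJ⟩
        have hEuc : E.card + J'.card = (D \ Z).card + J.card := by
          rw [hEdef, ← hint]
          exact Finset.card_union_add_card_inter _ _
        have hDX : (D \ Z).card + (D ∩ Z).card = D.card :=
          Finset.card_sdiff_add_card_inter D Z
        have hZsplit : (Z \ D).card + (Z ∩ D).card = Z.card :=
          Finset.card_sdiff_add_card_inter Z D
        have hZDcomm : (Z ∩ D).card = (D ∩ Z).card := by rw [Finset.inter_comm]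
        omega

end Hall

section Hajnal
variable [Fintype V] [DecidableEq V]

lemma hajnal (G : SimpleGraph V) [DecidableRel G.Adj] (hcrit : IsTauCritical G) (v : V) :
    Fintype.card V + G.degree v ≤ 2 * tauNum G + 1 := by
  obtain ⟨u, hu⟩ := hcrit.1 v
  have hvu : v ≠ u := hu.ne
  obtain ⟨D, hvD, huD, hDcard, hDonly⟩ := exists_witness G hcrit hu
  set J := (D.erase v).erase u with hJdef
  have hJsub : J ⊆ D := fun x hx =>
    Finset.mem_of_mem_erase (Finset.mem_of_mem_erase hx)
  have hJv : ∀ x ∈ J, x ≠ v ∧ x ≠ u := by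
    intro x hx
    exact ⟨(Finset.mem_erase.mp (Finset.mem_of_mem_erase hx)).1,
      (Finset.mem_erase.mp hx).1⟩
  have huD' : u ∈ D.erase v := Finset.mem_erase.mpr ⟨fun h => hvu h.symm, huD⟩
  have hJcard : J.card + 2 = D.card := by
    rw [hJdef, Finset.card_erase_of_mem huD', Finset.card_erase_of_mem hvD]
    have : 1 ≤ D.card := Finset.card_pos.mpr ⟨v, hvD⟩
    have : 2 ≤ D.card := by
      have := Finset.one_lt_card.mpr ⟨v, hvD, u, huD, hvu⟩
      omega
    omega
  have hind : ∀ x ∈ J, ∀ y ∈ J, ¬ G.Adj x y := by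
    intro x hx y hy hxy
    rcases hDonly x (hJsub hx) y (hJsub hy) hxy with ⟨h1, _⟩ | ⟨h1, _⟩
    · exact (hJv x hx).1 h1
    · exact (hJv x hx).2 h1
  have havoid : ∀ x ∈ J, ¬ G.Adj v x ∧ x ≠ v := by
    intro x hx
    refine ⟨fun hvx => ?_, (hJv x hx).1⟩
    rcases hDonly v hvD x (hJsub hx) hvx with ⟨_, h2⟩ | ⟨h1, _⟩
    · exact (hJv x hx).2 h2
    · exact hvu h1
  have hHL := hall_lemma G hcrit v J.card J le_rfl hind havoid
  set Z := zs G v J with hZdef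
  -- disjointness and counting
  set Nv := insert v (G.neighborFinset v) with hNvdef
  have hNvcard : Nv.card = G.degree v + 1 := by
    rw [hNvdef, Finset.card_insert_of_notMem (fun h => G.loopless.irrefl v ((SimpleGraph.mem_neighborFinset G _ _).mp h))]
    rw [G.card_neighborFinset_eq_degree]
  have hd1 : Disjoint J Nv := by
    rw [Finset.disjoint_left]
    intro x hx hxNv
    rcases Finset.mem_insert.mp hxNv with h | h
    · exact (havoid x hx).2 h
    · exact (havoid x hx).1 ((SimpleGraph.mem_neighborFinset G _ _).mp h)
  have hd2 : Disjoint (J ∪ Nv) Z := by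
    rw [Finset.disjoint_left]
    intro x hx hxZ
    obtain ⟨⟨y, hy, hadj⟩, hnv⟩ := mem_zs.mp hxZ
    rcases Finset.mem_union.mp hx with h | h
    · exact hind y hy x h hadj
    · rcases Finset.mem_insert.mp h with h' | h'
      · exact (havoid y hy).1 (h' ▸ hadj).symm
      · exact hnv ((SimpleGraph.mem_neighborFinset G _ _).mp h')
  have hcard : (J ∪ Nv ∪ Z).card = J.card + Nv.card + Z.card := by
    rw [Finset.card_union_of_disjoint hd2, Finset.card_union_of_disjoint hd1]
  have hle : (J ∪ Nv ∪ Z).card ≤ Fintype.card V := by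
    simpa using Finset.card_le_univ (J ∪ Nv ∪ Z)
  omega

end Hajnal

section Spec
open Matrix
variable [Fintype V] [DecidableEq V]

lemma specRad_le_of_degree_le (G : SimpleGraph V) [DecidableRel G.Adj] {C : ℝ}
    (hC : 0 ≤ C) (hdeg : ∀ i : V, (G.degree i : ℝ) ≤ C) :
    specRad G ≤ C := by
  apply Real.sSup_le _ hC
  intro μ hμ
  have h1 : ¬ IsUnit (μ • (1 : Matrix V V ℝ) - G.adjMatrix ℝ) := by
    have := spectrum.mem_iff.mp hμ
    rwa [Algebra.algebraMap_eq_smul_one] at this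
  cases isEmpty_or_nonempty V with
  | inl hempty =>
    exact absurd (isUnit_of_subsingleton _) h1
  | inr hne =>
    have h2 : (μ • (1 : Matrix V V ℝ) - G.adjMatrix ℝ).det = 0 := by
      by_contra h
      exact h1 ((Matrix.isUnit_iff_isUnit_det _).mpr (isUnit_iff_ne_zero.mpr h))
    obtain ⟨x, hx0, hxe⟩ := (Matrix.exists_mulVec_eq_zero_iff).mpr h2
    have hAx : G.adjMatrix ℝ *ᵥ x = μ • x := by
      have h3 : μ • ((1 : Matrix V V ℝ) *ᵥ x) - G.adjMatrix ℝ *ᵥ x = 0 := by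
        rw [← Matrix.smul_mulVec, ← Matrix.sub_mulVec]
        exact hxe
      rw [Matrix.one_mulVec] at h3
      linear_combination (norm := module) -h3
    obtain ⟨i, hi⟩ := Finite.exists_max (fun j => |x j|)
    have hxi : 0 < |x i| := by
      obtain ⟨j, hj⟩ := Function.ne_iff.mp hx0
      exact lt_of_lt_of_le (abs_pos.mpr hj) (hi j)
    have hrow : (G.adjMatrix ℝ *ᵥ x) i = ∑ u ∈ G.neighborFinset i, x u :=
      SimpleGraph.adjMatrix_mulVec_apply _ _ _
    have hbound : |μ| * |x i| ≤ C * |x i| := by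
      have e1 : |μ| * |x i| = |(G.adjMatrix ℝ *ᵥ x) i| := by
        rw [hAx]
        simp [abs_mul]
      rw [e1, hrow]
      calc |∑ u ∈ G.neighborFinset i, x u| ≤ ∑ u ∈ G.neighborFinset i, |x u| :=
            Finset.abs_sum_le_sum_abs _ _
        _ ≤ ∑ _u ∈ G.neighborFinset i, |x i| := Finset.sum_le_sum (fun u _ => hi u)
        _ = (G.degree i : ℝ) * |x i| := by
            rw [Finset.sum_const, SimpleGraph.card_neighborFinset_eq_degree]
            simp [nsmul_eq_mul]
        _ ≤ C * |x i| := by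
            apply mul_le_mul_of_nonneg_right (hdeg i) (abs_nonneg _)
    have : |μ| ≤ C := le_of_mul_le_mul_right hbound hxi
    exact le_trans (le_abs_self μ) this

end Spec

/-- For a nonnegative integer `r` and a τ-critical graph `G` with
`τ(G) = t ≥ r` and `|V(G)| = n`, we have `n·(r + λ₁/2) ≤ (t+r+1 choose 2)`. -/
theorem tau_critical_card_mul_r_add_half_specRad_le (G : SimpleGraph V) [Fintype V]
    [DecidableEq V] [DecidableRel G.Adj] (t n r : ℕ) (hcrit : IsTauCritical G)
    (ht : tauNum G = t) (hn : Fintype.card V = n) (hr : r ≤ t) :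
    (n : ℝ) * (r + specRad G / 2) ≤ ((t + r + 1).choose 2 : ℝ) := by
  rcases Nat.eq_zero_or_pos n with hn0 | hnpos
  · rw [hn0]
    simp only [Nat.cast_zero, zero_mul]
    positivity
  · haveI hnonempty : Nonempty V := Fintype.card_pos_iff.mp (by rw [hn]; exact hnpos)
    have hHaj : ∀ w : V, n + G.degree w ≤ 2 * t + 1 := fun w => by
      have := hajnal G hcrit w
      rwa [ht, hn] at this
    obtain ⟨v₀⟩ := hnonempty
    have hd₀ : 0 < G.degree v₀ := by
      obtain ⟨u, hu⟩ := hcrit.1 v₀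
      exact G.degree_pos_iff_exists_adj v₀ |>.mpr ⟨u, hu⟩
    have hn2t : n ≤ 2 * t := by have := hHaj v₀; omega
    set C : ℝ := 2 * (t : ℝ) + 1 - n with hCdef
    have hC : 0 ≤ C := by
      have h' : (n : ℝ) ≤ 2 * t := by exact_mod_cast hn2t
      rw [hCdef]; linarith
    have hdeg : ∀ i : V, (G.degree i : ℝ) ≤ C := by
      intro i
      have h' := hHaj i
      have h'' : (n : ℝ) + G.degree i ≤ 2 * t + 1 := by exact_mod_cast h'
      rw [hCdef]; linarith
    have hspec : specRad G ≤ C := specRad_le_of_degree_le G hC hdeg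
    have hchnat : (t + r + 1).choose 2 * 2 = (t + r + 1) * (t + r) := by
      rw [Nat.choose_two_right]
      have hdvd : 2 ∣ (t + r + 1) * (t + r + 1 - 1) := by
        simp only [Nat.add_sub_cancel]
        have := Nat.even_mul_succ_self (t + r)
        rcases this with ⟨c, hc⟩
        exact ⟨c, by rw [mul_comm (t + r + 1) (t + r), hc]; omega⟩
      rw [Nat.div_mul_cancel hdvd]
      simp
    have hch2 : ((t + r + 1).choose 2 : ℝ) * 2 = ((t : ℝ) + r + 1) * ((t : ℝ) + r) := by
      exact_mod_cast congrArg (Nat.cast : ℕ → ℝ) hchnat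
    have hcases : 0 ≤ ((n : ℝ) - ((t : ℝ) + r)) * ((n : ℝ) - ((t : ℝ) + r) - 1) := by
      rcases le_or_gt n (t + r) with h | h
      · have h' : (n : ℝ) ≤ (t : ℝ) + r := by exact_mod_cast h
        nlinarith
      · have h' : (t : ℝ) + r + 1 ≤ (n : ℝ) := by exact_mod_cast h
        nlinarith
    have h1 : (n : ℝ) * (r + specRad G / 2) ≤ (n : ℝ) * (r + C / 2) :=
      mul_le_mul_of_nonneg_left (by linarith) (Nat.cast_nonneg n)
    have h2 : (n : ℝ) * (r + C / 2) ≤ ((t + r + 1).choose 2 : ℝ) := by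
      rw [hCdef]
      nlinarith [hcases, hch2]
    linarith
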